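/- Let n ≥ 1, let F be the normalized DFT matrix with entries F_{jk} = e^{2πi jk/n}/√n, and for t ∈ ℝ let γ(t) = F D(t) F* where D(t) = diag(e^{2πikt/n})_{k=0}^{n-1}. Then for every t ∈ ℝ, perm(γ(1−t)) = conj(perm(γ(t))). In particular |perm(γ(1−t))| = |perm(γ(t))|, i.e., the function f(t) = −(1/n) ln|perm(γ(t))| satisfies f(t) = f(1−t). -/

import Mathlib

open Matrix

/-- The normalized DFT matrix: `F_{jk} = e^{2πi jk/n}/√n`. -/
noncomputable def dftMatrix (n : ℕ) : Matrix (Fin n) (Fin n) ℂ :=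
  Matrix.of fun j k : Fin n =>
    Complex.exp (2 * (Real.pi : ℂ) * Complex.I * ((j : ℕ) : ℂ) * ((k : ℕ) : ℂ) / (n : ℂ)) /
      ((Real.sqrt n : ℝ) : ℂ)

/-- The geodesic on `U(n)` from the identity to the n-cycle permutation matrix:
`γ(t) = F D(t) F*` with `D(t) = diag(e^{2πikt/n})`. -/
noncomputable def cycleGeodesic (n : ℕ) (t : ℝ) : Matrix (Fin n) (Fin n) ℂ :=
  dftMatrix n *
    Matrix.diagonal (fun k : Fin n =>
      Complex.exp (2 * (Real.pi : ℂ) * Complex.I * ((k : ℕ) : ℂ) * (t : ℂ) / (n : ℂ))) *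
    (dftMatrix n)ᴴ

open Complex in
lemma exp_nat_period (n c q k : ℕ) :
    Complex.exp (2 * (Real.pi : ℂ) * Complex.I * ((c + n * q : ℕ) : ℂ) * (k : ℂ) / (n : ℂ))
      = Complex.exp (2 * (Real.pi : ℂ) * Complex.I * (c : ℂ) * (k : ℂ) / (n : ℂ)) := by
  rcases Nat.eq_zero_or_pos n with h | h
  · subst h; simp
  have hn : (n : ℂ) ≠ 0 := Nat.cast_ne_zero.mpr h.ne'
  have : (2 * (Real.pi : ℂ) * Complex.I * ((c + n * q : ℕ) : ℂ) * (k : ℂ) / (n : ℂ))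
      = 2 * (Real.pi : ℂ) * Complex.I * (c : ℂ) * (k : ℂ) / (n : ℂ)
        + ((q * k : ℕ) : ℂ) * (2 * (Real.pi : ℂ) * Complex.I) := by
    push_cast; field_simp
  rw [this, Complex.exp_add, Complex.exp_nat_mul_two_pi_mul_I, mul_one]

lemma cycleGeodesic_apply (n : ℕ) (t : ℝ) (j l : Fin n) :
    cycleGeodesic n t j l = ∑ k : Fin n,
      dftMatrix n j k *
        Complex.exp (2 * (Real.pi : ℂ) * Complex.I * ((k : ℕ) : ℂ) * (t : ℂ) / (n : ℂ)) *
        (starRingEnd ℂ) (dftMatrix n l k) := by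
  simp only [cycleGeodesic, Matrix.mul_apply, Matrix.conjTranspose_apply]
  refine Finset.sum_congr rfl fun k _ => ?_
  rw [show (∑ m : Fin n, dftMatrix n j m *
      Matrix.diagonal (fun k : Fin n =>
        Complex.exp (2 * (Real.pi : ℂ) * Complex.I * ((k : ℕ) : ℂ) * (t : ℂ) / (n : ℂ))) m k)
      = (dftMatrix n * Matrix.diagonal (fun k : Fin n =>
        Complex.exp (2 * (Real.pi : ℂ) * Complex.I * ((k : ℕ) : ℂ) * (t : ℂ) / (n : ℂ)))) j k
      from rfl, Matrix.mul_diagonal]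
  rfl

lemma exp_nat_congr (n a b k : ℕ) (h : a % n = b % n) :
    Complex.exp (2 * (Real.pi : ℂ) * Complex.I * (a : ℂ) * (k : ℂ) / (n : ℂ))
      = Complex.exp (2 * (Real.pi : ℂ) * Complex.I * (b : ℂ) * (k : ℂ) / (n : ℂ)) := by
  conv_lhs => rw [← Nat.mod_add_div a n]
  conv_rhs => rw [← Nat.mod_add_div b n]
  rw [exp_nat_period n (a % n) (a / n) k, exp_nat_period n (b % n) (b / n) k, h]

lemma key (n : ℕ) [NeZero n] (t : ℝ) :
    cycleGeodesic n (1 - t)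
      = (((cycleGeodesic n t).map (starRingEnd ℂ))ᵀ).submatrix
          (Equiv.addRight (1 : Fin n)) id := by
  ext j l
  rw [Matrix.submatrix_apply, Matrix.transpose_apply, Matrix.map_apply, cycleGeodesic_apply,
    cycleGeodesic_apply, map_sum]
  refine Finset.sum_congr rfl fun k _ => ?_
  simp only [Equiv.coe_addRight, id_eq, dftMatrix, Matrix.of_apply, _root_.map_mul, map_div₀,
    ← Complex.exp_conj, map_natCast, map_ofNat, Complex.conj_I, Complex.conj_ofReal,
    RingHomCompTriple.comp_apply, RingHom.id_apply, Complex.conj_conj, map_neg, neg_neg]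
  have h2 : ((j : ℕ) + 1) % n = (((j + 1 : Fin n) : ℕ)) % n := by
    simp [Fin.val_add, Fin.val_one', Nat.add_mod]
  have h : Complex.exp (2 * (Real.pi : ℂ) * Complex.I * ((j : ℕ) : ℂ) * ((k : ℕ) : ℂ) / (n : ℂ))
        * Complex.exp (2 * (Real.pi : ℂ) * Complex.I * ((k : ℕ) : ℂ) * ((1 - t : ℝ) : ℂ) / (n : ℂ))
      = Complex.exp (2 * (Real.pi : ℂ) * -Complex.I * ((k : ℕ) : ℂ) * ((t : ℝ) : ℂ) / (n : ℂ))
        * Complex.exp (2 * (Real.pi : ℂ) * Complex.I * ((((j + 1 : Fin n) : ℕ)) : ℂ) * ((k : ℕ) : ℂ) / (n : ℂ)) := by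
    rw [← exp_nat_congr n ((j : ℕ) + 1) _ (k : ℕ) h2, ← Complex.exp_add, ← Complex.exp_add]
    have hn0 : (n : ℂ) ≠ 0 := Nat.cast_ne_zero.mpr (NeZero.ne n)
    congr 1
    push_cast
    field_simp
    ring
  linear_combination (Complex.exp (2 * (Real.pi : ℂ) * -Complex.I * ((l : ℕ) : ℂ) * ((k : ℕ) : ℂ) / (n : ℂ))
    / (((Real.sqrt n : ℝ) : ℂ) * ((Real.sqrt n : ℝ) : ℂ))) * h

lemma permanent_map_conj {n : ℕ} (A : Matrix (Fin n) (Fin n) ℂ) :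
    (A.map (starRingEnd ℂ)).permanent = starRingEnd ℂ A.permanent := by
  simp [Matrix.permanent, map_sum, map_prod, Matrix.map_apply]

/-- `perm(γ(1−t)) = conj(perm(γ(t)))`; in particular the magnitudes agree. -/
theorem permanent_cycleGeodesic_symm (n : ℕ) (hn : 1 ≤ n) (t : ℝ) :
    (cycleGeodesic n (1 - t)).permanent = starRingEnd ℂ (cycleGeodesic n t).permanent ∧
      ‖(cycleGeodesic n (1 - t)).permanent‖
        = ‖(cycleGeodesic n t).permanent‖ := by
  haveI : NeZero n := ⟨by omega⟩
  have h1 : (cycleGeodesic n (1 - t)).permanent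
      = starRingEnd ℂ (cycleGeodesic n t).permanent := by
    rw [key n t, Matrix.permanent_permute_cols, Matrix.permanent_transpose, permanent_map_conj]
  exact ⟨h1, by rw [h1, Complex.norm_conj]⟩
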